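/- arXiv:1710.11253 — 3 statements merged into one kernel-verified Lean document; each statement's English description precedes it below -/
import Mathlib

section
/- Let A be an m×n real matrix and k ≤ n. There exists a subset J ⊆ [n] of size k and a matrix Z ∈ ℝ^{k×n} such that the number of entries where A differs from A_{:,J}·Z is at most (k+1) times the minimum over all rank-k matrices B of the number of entries where A and B differ. -/
open scoped Classical

/-- `l0 A` is the number of nonzero entries of the matrix `A`. -/
noncomputable def l0 {m n : ℕ} (A : Matrix (Fin m) (Fin n) ℝ) : ℕ :=
  (Finset.univ.filter fun p : Fin m × Fin n => A p.1 p.2 ≠ 0).card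

lemma l0_eq_sum_cols {m n : ℕ} (A : Matrix (Fin m) (Fin n) ℝ) :
    l0 A = ∑ j : Fin n, (Finset.univ.filter fun i : Fin m => A i j ≠ 0).card := by
  classical
  simp only [l0, Finset.card_filter]
  rw [Fintype.sum_prod_type]
  rw [Finset.sum_comm]

/-- The key structural lemma: for any rank-`k` matrix `B`, there are `k` columns of `A`
and a coefficient matrix `Z` with `l0 (A - A_J Z) ≤ (k+1) * l0 (A - B)`. -/
lemma structural {m n k : ℕ} (A B : Matrix (Fin m) (Fin n) ℝ) (hB : B.rank = k) :
    ∃ J : Fin k → Fin n, Function.Injective J ∧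
      ∃ Z : Matrix (Fin k) (Fin n) ℝ,
        l0 (A - A.submatrix id J * Z) ≤ (k + 1) * l0 (A - B) := by
  classical
  -- columns of B
  set col : Fin n → (Fin m → ℝ) := fun j i => B i j with hcol
  -- cost of a column
  set c : Fin n → ℕ := fun j =>
    (Finset.univ.filter fun i : Fin m => (A - B) i j ≠ 0).card with hc
  -- Step 1: there exists an injective J₀ whose columns span all columns of B.
  have hrank : Module.finrank ℝ (Submodule.span ℝ (Set.range col)) = k := by
    rw [Matrix.rank_eq_finrank_span_cols] at hB
    exact hB
  obtain ⟨s, hs_sub, hs_span, hs_ind⟩ := exists_linearIndependent ℝ (Set.range col)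
  have hsfin : s.Finite := (Set.finite_range col).subset hs_sub
  haveI : Fintype s := hsfin.fintype
  have hcard : s.toFinset.card = k := by
    rw [← finrank_span_set_eq_card hs_ind, hs_span, hrank]
  have e : Fin k ≃ s.toFinset := (Finset.equivFinOfCardEq hcard).symm
  have hidx : ∀ v : s.toFinset, ∃ j : Fin n, col j = (v : Fin m → ℝ) := by
    intro v
    exact hs_sub (Set.mem_toFinset.mp v.2)
  choose idx hidx_spec using hidx
  have hP0 : ∃ J : Fin k → Fin n, Function.Injective J ∧
      ∀ j, col j ∈ Submodule.span ℝ (Set.range fun t => col (J t)) := by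
    refine ⟨fun t => idx (e t), ?_, ?_⟩
    · intro a b hab
      have hab' : idx (e a) = idx (e b) := hab
      have : ((e a : s.toFinset) : Fin m → ℝ) = ((e b : s.toFinset) : Fin m → ℝ) := by
        rw [← hidx_spec (e a), ← hidx_spec (e b), hab']
      exact e.injective (Subtype.ext this)
    · intro j
      have hrange : (Set.range fun t => col (idx (e t))) = s := by
        ext v
        constructor
        · rintro ⟨t, rfl⟩
          show col (idx (e t)) ∈ s
          rw [hidx_spec (e t)]
          exact Set.mem_toFinset.mp (e t).2
        · intro hv
          refine ⟨e.symm ⟨v, Set.mem_toFinset.mpr hv⟩, ?_⟩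
          show col (idx (e (e.symm ⟨v, Set.mem_toFinset.mpr hv⟩))) = v
          rw [Equiv.apply_symm_apply, hidx_spec]
      rw [hrange, hs_span]
      exact Submodule.subset_span ⟨j, rfl⟩
  -- Step 2: take a minimum-cost such J.
  set P : (Fin k → Fin n) → Prop := fun J => Function.Injective J ∧
      ∀ j, col j ∈ Submodule.span ℝ (Set.range fun t => col (J t)) with hPdef
  have hGne : (Finset.univ.filter P).Nonempty := by
    obtain ⟨J₀, h1, h2⟩ := hP0
    exact ⟨J₀, Finset.mem_filter.mpr ⟨Finset.mem_univ _, h1, h2⟩⟩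
  obtain ⟨J, hJmem, hJmin⟩ :=
    Finset.exists_min_image (Finset.univ.filter P) (fun J => ∑ t, c (J t)) hGne
  have hJP : P J := (Finset.mem_filter.mp hJmem).2
  -- Step 3: good representations exist.
  have hrep : ∀ j : Fin n, ∃ z : Fin k → ℝ,
      (∑ t, z t • col (J t)) = col j ∧ ∀ t, z t ≠ 0 → c (J t) ≤ c j := by
    intro j
    by_cases hj : ∃ t0, J t0 = j
    · obtain ⟨t0, ht0⟩ := hj
      refine ⟨fun t => if t = t0 then 1 else 0, ?_, ?_⟩
      · simp [ht0]
      · intro t hzt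
        have : t = t0 := by by_contra h; simp [h] at hzt
        rw [this, ht0]
    · by_contra hcon
      push_neg at hcon
      obtain ⟨z, hz⟩ := (Submodule.mem_span_range_iff_exists_fun ℝ).mp (hJP.2 j)
      obtain ⟨t, hzt, hct⟩ := hcon z hz
      -- exchange: replace J t by j
      set J' : Fin k → Fin n := Function.update J t j with hJ'
      have hJ't : J' t = j := Function.update_self t j J
      have hJ'u : ∀ u, u ≠ t → J' u = J u := fun u hu => Function.update_of_ne hu j J
      have hJ'inj : Function.Injective J' := by
        intro a b hab
        by_cases ha : a = t <;> by_cases hb : b = t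
        · rw [ha, hb]
        · exfalso; rw [ha, hJ't] at hab; rw [hJ'u b hb] at hab
          exact hj ⟨b, hab.symm⟩
        · exfalso; rw [hb, hJ't] at hab; rw [hJ'u a ha] at hab
          exact hj ⟨a, hab⟩
        · rw [hJ'u a ha, hJ'u b hb] at hab; exact hJP.1 hab
      have hmemJ' : ∀ u, col (J u) ∈ Submodule.span ℝ (Set.range fun t' => col (J' t')) := by
        intro u
        by_cases hu : u = t
        · -- col (J t) = (z t)⁻¹ • (col j - ∑_{u ≠ t} z u • col (J u))
          subst hu
          have hsum : col j = z u • col (J u) + ∑ v ∈ Finset.univ.erase u, z v • col (J v) := by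
            rw [← hz, ← Finset.add_sum_erase _ _ (Finset.mem_univ u)]
          have hJu : col (J u) = (z u)⁻¹ • (col j - ∑ v ∈ Finset.univ.erase u, z v • col (J v)) := by
            rw [hsum]
            rw [add_sub_cancel_right, smul_smul, inv_mul_cancel₀ hzt, one_smul]
          rw [hJu]
          refine Submodule.smul_mem _ _ (Submodule.sub_mem _ ?_ ?_)
          · rw [← hJ't]; exact Submodule.subset_span ⟨u, rfl⟩
          · refine Submodule.sum_mem _ ?_
            intro v hv
            have hvne : v ≠ u := Finset.ne_of_mem_erase hv
            refine Submodule.smul_mem _ _ ?_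
            rw [← hJ'u v hvne]
            exact Submodule.subset_span ⟨v, rfl⟩
        · rw [← hJ'u u hu]
          exact Submodule.subset_span ⟨u, rfl⟩
      have hJ'P : P J' := by
        refine ⟨hJ'inj, fun j' => ?_⟩
        have hle : Submodule.span ℝ (Set.range fun t' => col (J t')) ≤
            Submodule.span ℝ (Set.range fun t' => col (J' t')) := by
          rw [Submodule.span_le]
          rintro x ⟨u, rfl⟩
          exact hmemJ' u
        exact hle (hJP.2 j')
      have hle' : ∀ u, c (J' u) ≤ c (J u) := by
        intro u
        by_cases hu : u = t
        · subst hu; rw [hJ't]; exact le_of_lt hct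
        · exact le_of_eq (by rw [hJ'u u hu])
      have hlt : (∑ u, c (J' u)) < ∑ u, c (J u) :=
        Finset.sum_lt_sum (fun u _ => hle' u)
          ⟨t, Finset.mem_univ t, by rw [hJ't]; exact hct⟩
      have := hJmin J' (Finset.mem_filter.mpr ⟨Finset.mem_univ _, hJ'P⟩)
      omega
  choose Zfun hZrep hZsmall using hrep
  refine ⟨J, hJP.1, Matrix.of (fun t j => Zfun j t), ?_⟩
  set Z : Matrix (Fin k) (Fin n) ℝ := Matrix.of (fun t j => Zfun j t) with hZ
  -- Step 5: counting.
  set E : Matrix (Fin m) (Fin n) ℝ := A - B with hE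
  have hpt : ∀ i j, (A - A.submatrix id J * Z) i j = E i j - ∑ t, E i (J t) * Z t j := by
    intro i j
    have hBij : B i j = ∑ t, B i (J t) * Z t j := by
      have h1 := congrFun (hZrep j) i
      simp only [Finset.sum_apply, Pi.smul_apply, smul_eq_mul, hcol] at h1
      rw [← h1]
      apply Finset.sum_congr rfl
      intro t _
      show Zfun j t * B i (J t) = B i (J t) * Zfun j t
      ring
    simp only [Matrix.sub_apply, Matrix.mul_apply, Matrix.submatrix_apply, id_eq, hE]
    have h2 : ∑ t, (A i (J t) - B i (J t)) * Z t j
        = (∑ t, A i (J t) * Z t j) - ∑ t, B i (J t) * Z t j := by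
      rw [← Finset.sum_sub_distrib]
      apply Finset.sum_congr rfl
      intro t _
      ring
    rw [h2, ← hBij]
    ring
  -- per-column bound
  have hcolbound : ∀ j : Fin n,
      (Finset.univ.filter fun i : Fin m => (A - A.submatrix id J * Z) i j ≠ 0).card
        ≤ (k + 1) * c j := by
    intro j
    have hsub : (Finset.univ.filter fun i : Fin m => (A - A.submatrix id J * Z) i j ≠ 0)
        ⊆ (Finset.univ.filter fun i : Fin m => E i j ≠ 0) ∪
          (Finset.univ.filter fun t : Fin k => Z t j ≠ 0).biUnion
            (fun t => Finset.univ.filter fun i : Fin m => E i (J t) ≠ 0) := by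
      intro i hi
      have hi' := (Finset.mem_filter.mp hi).2
      rw [hpt i j] at hi'
      by_cases hEij : E i j ≠ 0
      · exact Finset.mem_union_left _ (Finset.mem_filter.mpr ⟨Finset.mem_univ _, hEij⟩)
      · push_neg at hEij
        have : ∃ t, Z t j ≠ 0 ∧ E i (J t) ≠ 0 := by
          by_contra h
          push_neg at h
          apply hi'
          rw [hEij, zero_sub, neg_eq_zero]
          apply Finset.sum_eq_zero
          intro t _
          by_cases hzt : Z t j = 0
          · rw [hzt, mul_zero]
          · rw [h t hzt, zero_mul]
        obtain ⟨t, hzt, hEt⟩ := this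
        refine Finset.mem_union_right _ (Finset.mem_biUnion.mpr ⟨t, ?_, ?_⟩)
        · exact Finset.mem_filter.mpr ⟨Finset.mem_univ _, hzt⟩
        · exact Finset.mem_filter.mpr ⟨Finset.mem_univ _, hEt⟩
    calc (Finset.univ.filter fun i : Fin m => (A - A.submatrix id J * Z) i j ≠ 0).card
        ≤ ((Finset.univ.filter fun i : Fin m => E i j ≠ 0) ∪
          (Finset.univ.filter fun t : Fin k => Z t j ≠ 0).biUnion
            (fun t => Finset.univ.filter fun i : Fin m => E i (J t) ≠ 0)).card :=
          Finset.card_le_card hsub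
      _ ≤ (Finset.univ.filter fun i : Fin m => E i j ≠ 0).card +
          ((Finset.univ.filter fun t : Fin k => Z t j ≠ 0).biUnion
            (fun t => Finset.univ.filter fun i : Fin m => E i (J t) ≠ 0)).card :=
          Finset.card_union_le _ _
      _ ≤ c j + ∑ t ∈ Finset.univ.filter fun t : Fin k => Z t j ≠ 0,
            (Finset.univ.filter fun i : Fin m => E i (J t) ≠ 0).card :=
          Nat.add_le_add_left Finset.card_biUnion_le _
      _ ≤ c j + ∑ t ∈ Finset.univ.filter fun t : Fin k => Z t j ≠ 0, c j := by
          gcongr with t ht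
          exact hZsmall j t (Finset.mem_filter.mp ht).2
      _ ≤ c j + k * c j := by
          rw [Finset.sum_const, smul_eq_mul]
          gcongr
          calc (Finset.univ.filter fun t : Fin k => Z t j ≠ 0).card
              ≤ (Finset.univ : Finset (Fin k)).card := Finset.card_filter_le _ _
            _ = k := Finset.card_fin k
      _ = (k + 1) * c j := by ring
  calc l0 (A - A.submatrix id J * Z)
      = ∑ j, (Finset.univ.filter fun i : Fin m => (A - A.submatrix id J * Z) i j ≠ 0).card :=
        l0_eq_sum_cols _
    _ ≤ ∑ j, (k + 1) * c j := Finset.sum_le_sum fun j _ => hcolbound j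
    _ = (k + 1) * ∑ j, c j := by rw [Finset.mul_sum]
    _ = (k + 1) * l0 (A - B) := by rw [l0_eq_sum_cols (A - B)]

/-- there exist `k` columns of `A` and a matrix `Z` giving a
`(k+1)`-approximation to the best rank-`k` approximation of `A` in ℓ₀. -/
theorem stmt_0 (m n k : ℕ) (hk : k ≤ n) (A : Matrix (Fin m) (Fin n) ℝ) :
    ∃ J : Fin k → Fin n, Function.Injective J ∧
      ∃ Z : Matrix (Fin k) (Fin n) ℝ,
        ∀ B : Matrix (Fin m) (Fin n) ℝ, B.rank = k →
          l0 (A - A.submatrix id J * Z) ≤ (k + 1) * l0 (A - B) := by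
  classical
  by_cases hex : ∃ B : Matrix (Fin m) (Fin n) ℝ, B.rank = k
  · -- take a minimizer of l0 (A - B) over rank-k matrices B
    obtain ⟨B₀, hB₀⟩ := hex
    have hPex : ∃ c : ℕ, ∃ B : Matrix (Fin m) (Fin n) ℝ, B.rank = k ∧ l0 (A - B) = c :=
      ⟨l0 (A - B₀), B₀, hB₀, rfl⟩
    obtain ⟨Bstar, hBstar, hBval⟩ := Nat.find_spec hPex
    have hmin : ∀ B : Matrix (Fin m) (Fin n) ℝ, B.rank = k →
        l0 (A - Bstar) ≤ l0 (A - B) := by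
      intro B hB
      rw [hBval]
      exact Nat.find_le ⟨B, hB, rfl⟩
    obtain ⟨J, hJ, Z, hZ⟩ := structural A Bstar hBstar
    exact ⟨J, hJ, Z, fun B hB => hZ.trans (Nat.mul_le_mul_left _ (hmin B hB))⟩
  · refine ⟨Fin.castLE hk, Fin.castLE_injective hk, 0, fun B hB => absurd ⟨B, hB⟩ hex⟩
end

section
/- Let A = I + J ∈ ℝ^{n×n} where I is the identity and J is the all-ones matrix. Then for every column index j, min over z ∈ ℝ^n of ‖A − A_{:,j}·zᵀ‖₀ ≥ 2(1 − 1/n)·OPT^(1), where OPT^(1) = min over u,v of ‖A − u·vᵀ‖₀. -/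
open scoped Classical

lemma l0_one (n : ℕ) : l0 (1 : Matrix (Fin n) (Fin n) ℝ) = n := by
  classical
  unfold l0
  have h : (Finset.univ.filter fun p : Fin n × Fin n =>
      (1 : Matrix (Fin n) (Fin n) ℝ) p.1 p.2 ≠ 0)
      = Finset.univ.image (fun i : Fin n => (i, i)) := by
    ext ⟨i, k⟩
    simp only [Finset.mem_filter, Finset.mem_univ, true_and, Finset.mem_image,
      Matrix.one_apply, Prod.mk.injEq]
    constructor
    · intro hne
      by_cases hik : i = k
      · exact ⟨i, rfl, hik⟩
      · simp [hik] at hne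
    · rintro ⟨a, rfl, rfl⟩
      simp
  rw [h, Finset.card_image_of_injective _ (fun a b hab => (Prod.ext_iff.mp hab).1)]
  simp

lemma two_le_col (n : ℕ) (hn : 3 ≤ n) (j k : Fin n) (hjk : k ≠ j) (z : Fin n → ℝ)
    (M : Matrix (Fin n) (Fin n) ℝ)
    (hM : ∀ i c, M i c = ((if i = c then (1:ℝ) else 0) + 1)
      - ((if i = j then (1:ℝ) else 0) + 1) * z c) :
    2 ≤ (Finset.univ.filter fun i => M i k ≠ 0).card := by
  classical
  obtain ⟨i0, hi0j, hi0k⟩ : ∃ i0 : Fin n, i0 ≠ j ∧ i0 ≠ k := by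
    by_contra h
    push_neg at h
    have hsub : (Finset.univ : Finset (Fin n)) ⊆ {j, k} := by
      intro i _
      by_cases hij : i = j
      · simp [hij]
      · simp [h i hij]
    have h1 := Finset.card_le_card hsub
    have h2 : ({j, k} : Finset (Fin n)).card ≤ 2 := Finset.card_insert_le _ _ |>.trans (by simp)
    simp only [Finset.card_univ, Fintype.card_fin] at h1
    omega
  have hMkk : M k k = 2 - z k := by rw [hM, if_pos rfl, if_neg hjk]; ring
  have hMjk : M j k = 1 - 2 * z k := by
    rw [hM, if_neg (Ne.symm hjk), if_pos rfl]; ring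
  have hMi0 : M i0 k = 1 - z k := by rw [hM, if_neg hi0k, if_neg hi0j]; ring
  rw [show (2 : ℕ) = 1 + 1 from rfl, ← Nat.lt_iff_add_one_le, Finset.one_lt_card]
  by_cases h1 : z k = 2
  · refine ⟨j, ?_, i0, ?_, Ne.symm hi0j⟩
    · simp only [Finset.mem_filter, Finset.mem_univ, true_and, hMjk, h1]; norm_num
    · simp only [Finset.mem_filter, Finset.mem_univ, true_and, hMi0, h1]; norm_num
  by_cases h2 : z k = 1/2
  · refine ⟨k, ?_, i0, ?_, Ne.symm hi0k⟩
    · simp only [Finset.mem_filter, Finset.mem_univ, true_and, hMkk, h2]; norm_num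
    · simp only [Finset.mem_filter, Finset.mem_univ, true_and, hMi0, h2]; norm_num
  · refine ⟨k, ?_, j, ?_, hjk⟩
    · simp only [Finset.mem_filter, Finset.mem_univ, true_and, hMkk]
      intro hc; apply h1; linarith
    · simp only [Finset.mem_filter, Finset.mem_univ, true_and, hMjk]
      intro hc; apply h2; linarith

lemma rhs_lb (n : ℕ) (hn : 3 ≤ n) (j : Fin n) (z : Fin n → ℝ)
    (M : Matrix (Fin n) (Fin n) ℝ)
    (hM : ∀ i c, M i c = ((if i = c then (1:ℝ) else 0) + 1)
      - ((if i = j then (1:ℝ) else 0) + 1) * z c) :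
    2 * (n - 1) ≤ l0 M := by
  classical
  set S := Finset.univ.filter fun p : Fin n × Fin n => M p.1 p.2 ≠ 0 with hSdef
  set T := S.filter fun p => p.2 ≠ j with hTdef
  have hmap : ∀ p ∈ T, p.2 ∈ Finset.univ.erase j := by
    intro p hp
    simp only [hTdef, Finset.mem_filter] at hp
    simp [hp.2]
  have hcard := Finset.card_eq_sum_card_fiberwise hmap
  have hfib : ∀ k ∈ Finset.univ.erase j, 2 ≤ (T.filter fun p => p.2 = k).card := by
    intro k hk
    have hkj : k ≠ j := (Finset.mem_erase.mp hk).1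
    have himg : (T.filter fun p => p.2 = k)
        = (Finset.univ.filter fun i => M i k ≠ 0).image (fun i => (i, k)) := by
      ext ⟨i, c⟩
      simp only [hTdef, hSdef, Finset.mem_filter, Finset.mem_univ, true_and,
        Finset.mem_image, Prod.mk.injEq]
      constructor
      · rintro ⟨⟨hne, _⟩, rfl⟩
        exact ⟨i, hne, rfl, rfl⟩
      · rintro ⟨a, ha, rfl, rfl⟩
        exact ⟨⟨ha, hkj⟩, rfl⟩
    rw [himg, Finset.card_image_of_injective _ (fun a b hab => (Prod.ext_iff.mp hab).1)]
    exact two_le_col n hn j k hkj z M hM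
  have h1 : 2 * (n - 1) ≤ T.card := by
    rw [hcard]
    calc 2 * (n - 1) = ∑ _k ∈ Finset.univ.erase j, 2 := by
          rw [Finset.sum_const, Finset.card_erase_of_mem (Finset.mem_univ j)]
          simp [mul_comm]
      _ ≤ _ := Finset.sum_le_sum hfib
  have h2 : T.card ≤ S.card := Finset.card_filter_le _ _
  exact le_trans h1 h2

/-- for `A = I + J`, any rank-1 approximation using a column of `A`
as left factor has cost at least `2(1 - 1/n)·OPT⁽¹⁾`. -/
theorem stmt_1 (n : ℕ) (hn : 0 < n) (A : Matrix (Fin n) (Fin n) ℝ)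
    (hA : A = 1 + Matrix.of fun _ _ => (1 : ℝ)) (j : Fin n) (z : Fin n → ℝ) :
    2 * (1 - 1 / (n : ℝ)) *
        ((sInf {t : ℕ | ∃ u v : Fin n → ℝ, t = l0 (A - Matrix.vecMulVec u v)} : ℕ) : ℝ)
      ≤ (l0 (A - Matrix.vecMulVec (fun i => A i j) z) : ℝ) := by
  classical
  have hAapp : ∀ i c : Fin n, A i c = (if i = c then (1:ℝ) else 0) + 1 := by
    intro i c
    rw [hA]
    simp [Matrix.add_apply, Matrix.one_apply]
  set M := A - Matrix.vecMulVec (fun i => A i j) z with hMdef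
  have hM : ∀ i c, M i c = ((if i = c then (1:ℝ) else 0) + 1)
      - ((if i = j then (1:ℝ) else 0) + 1) * z c := by
    intro i c
    rw [hMdef]
    simp [Matrix.sub_apply, Matrix.vecMulVec_apply, hAapp]
  set Sset := {t : ℕ | ∃ u v : Fin n → ℝ, t = l0 (A - Matrix.vecMulVec u v)} with hSset
  have hInf_le : sInf Sset ≤ l0 M := Nat.sInf_le ⟨fun i => A i j, z, rfl⟩
  have hInf_le_n : sInf Sset ≤ n := by
    apply Nat.sInf_le
    refine ⟨fun _ => 1, fun _ => 1, ?_⟩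
    have hid : A - Matrix.vecMulVec (fun _ => (1:ℝ)) (fun _ => 1) = 1 := by
      ext i c
      simp [Matrix.sub_apply, Matrix.vecMulVec_apply, hAapp, Matrix.one_apply]
    rw [hid, l0_one]
  rcases lt_or_ge n 3 with h3 | h3
  · have hfac : 2 * (1 - 1/(n:ℝ)) ≤ 1 := by
      have h1 : (1:ℝ) ≤ n := by exact_mod_cast hn
      have h2 : (n:ℝ) ≤ 2 := by exact_mod_cast (by omega : n ≤ 2)
      have h4 : (1:ℝ)/2 ≤ 1/(n:ℝ) := by
        apply one_div_le_one_div_of_le <;> linarith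
      linarith
    calc 2 * (1 - 1/(n:ℝ)) * ((sInf Sset : ℕ) : ℝ) ≤ 1 * ((sInf Sset : ℕ) : ℝ) :=
          mul_le_mul_of_nonneg_right hfac (Nat.cast_nonneg _)
      _ = ((sInf Sset : ℕ) : ℝ) := one_mul _
      _ ≤ (l0 M : ℝ) := Nat.cast_le.mpr hInf_le
  · have hrhs : 2 * (n - 1) ≤ l0 M := rhs_lb n h3 j z M hM
    have hnpos : (0:ℝ) < n := by positivity
    have hfac : (0:ℝ) ≤ 2 * (1 - 1/(n:ℝ)) := by
      have : (1:ℝ) ≤ n := by exact_mod_cast hn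
      have : 1/(n:ℝ) ≤ 1 := by
        rw [div_le_one hnpos]; exact this
      linarith
    have hrhsR : 2 * ((n:ℝ) - 1) ≤ (l0 M : ℝ) := by
      have := (Nat.cast_le (α := ℝ)).mpr hrhs
      push_cast [Nat.cast_sub hn] at this
      linarith
    calc 2 * (1 - 1/(n:ℝ)) * ((sInf Sset : ℕ) : ℝ) ≤ 2 * (1 - 1/(n:ℝ)) * (n:ℝ) :=
          mul_le_mul_of_nonneg_left (Nat.cast_le.mpr hInf_le_n) hfac
      _ = 2 * ((n:ℝ) - 1) := by field_simp
      _ ≤ (l0 M : ℝ) := hrhsR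
end

section
/- Let A ∈ {0,1}^{m×n}, OPT = min over u ∈ {0,1}^m, v ∈ {0,1}^n of ‖A − u·vᵀ‖₀, and let (u,v) attain OPT with β = ‖v‖₀. Then OPT ≥ Σ_{i=1}^{m} min{ ‖A_{i,:}‖₀, |‖A_{i,:}‖₀ − β| }. -/
open scoped Classical

/-- `OPT ≥ Σ_i min{‖A_{i,:}‖₀, |‖A_{i,:}‖₀ - β|}` for an optimal
binary rank-1 solution `(u,v)` with `β = ‖v‖₀`. -/
theorem stmt_6 (m n : ℕ) (A : Matrix (Fin m) (Fin n) ℝ)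
    (hA : ∀ i j, A i j = 0 ∨ A i j = 1)
    (u : Fin m → ℝ) (v : Fin n → ℝ)
    (hu : ∀ i, u i = 0 ∨ u i = 1) (hv : ∀ j, v j = 0 ∨ v j = 1)
    (hopt : ∀ u' : Fin m → ℝ, ∀ v' : Fin n → ℝ,
      (∀ i, u' i = 0 ∨ u' i = 1) → (∀ j, v' j = 0 ∨ v' j = 1) →
      l0 (A - Matrix.vecMulVec u v) ≤ l0 (A - Matrix.vecMulVec u' v')) :
    ∑ i : Fin m,
        min (Finset.univ.filter fun j : Fin n => A i j ≠ 0).card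
          ((((Finset.univ.filter fun j : Fin n => A i j ≠ 0).card : ℤ)
              - ((Finset.univ.filter fun j : Fin n => v j ≠ 0).card : ℤ)).natAbs)
      ≤ l0 (A - Matrix.vecMulVec u v) := by
  have key : l0 (A - Matrix.vecMulVec u v)
      = ∑ i : Fin m, (Finset.univ.filter fun j : Fin n =>
          A i j - u i * v j ≠ 0).card := by
    unfold l0
    rw [Finset.card_filter, Fintype.sum_prod_type]
    simp [Finset.card_filter, Matrix.vecMulVec, Matrix.sub_apply]
    exact Finset.sum_congr rfl fun x _ => Finset.sum_congr rfl fun y _ => ite_not _ _ _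
  rw [key]
  apply Finset.sum_le_sum
  intro i _
  rcases hu i with h0 | h1
  · have heq : (Finset.univ.filter fun j : Fin n => A i j - u i * v j ≠ 0).card
        = (Finset.univ.filter fun j : Fin n => A i j ≠ 0).card := by
      simp [h0]
    rw [heq]
    exact min_le_left _ _
  · have h1' : ∀ j, A i j - u i * v j = A i j - v j := by
      intro j; rw [h1, one_mul]
    set E := Finset.univ.filter fun j : Fin n => A i j - u i * v j ≠ 0 with hE
    set S := Finset.univ.filter fun j : Fin n => A i j ≠ 0 with hS
    set T := Finset.univ.filter fun j : Fin n => v j ≠ 0 with hT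
    have hST : S ⊆ E ∪ T := by
      intro j hj
      simp only [hS, Finset.mem_filter, Finset.mem_univ, true_and] at hj
      by_cases hv' : v j ≠ 0
      · exact Finset.mem_union_right _ (by simp [hT, hv'])
      · push_neg at hv'
        exact Finset.mem_union_left _
          (by simp [hE, h1', hv', hj])
    have hTS : T ⊆ E ∪ S := by
      intro j hj
      simp only [hT, Finset.mem_filter, Finset.mem_univ, true_and] at hj
      by_cases hA' : A i j ≠ 0
      · exact Finset.mem_union_right _ (by simp [hS, hA'])
      · push_neg at hA'
        exact Finset.mem_union_left _
          (by simp [hE, h1', hA', hj])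
    have h2 : S.card ≤ E.card + T.card :=
      le_trans (Finset.card_le_card hST) (Finset.card_union_le _ _)
    have h3 : T.card ≤ E.card + S.card :=
      le_trans (Finset.card_le_card hTS) (Finset.card_union_le _ _)
    omega
end
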